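/- Fix an integer t ≥ 1 and let S_{2m}(t,k) denote the number of functions from a set of 2m labelled balls to a set of k labelled bins such that every bin receives at most t balls. If 2m + 2 ≤ tk, then ((tk−2m)/t)·((tk−2m)/t − 1) · S_{2m}(t,k) ≤ S_{2m+2}(t,k) ≤ (tk−2m)^2 · S_{2m}(t,k). -/

import Mathlib

open Finset

private def load {k : ℕ} {α : Type*} [Fintype α] (g : α → Fin k) (j : Fin k) : ℕ :=
  (univ.filter fun i => g i = j).card

private lemma load_eq_card {k : ℕ} {α : Type*} [Fintype α] (g : α → Fin k) (j : Fin k) :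
    load g j = Fintype.card {i // g i = j} := (Fintype.card_subtype _).symm

private lemma ncard_eq_load {k : ℕ} {α : Type*} [Fintype α] (g : α → Fin k) (j : Fin k) :
    ({i | g i = j}).ncard = load g j := by
  rw [Set.ncard_eq_toFinset_card']
  simp [load, Set.toFinset_setOf]

private lemma sum_load {k : ℕ} {α : Type*} [Fintype α] (g : α → Fin k) :
    ∑ j : Fin k, load g j = Fintype.card α := by
  rw [← Finset.card_univ]
  exact (Finset.card_eq_sum_card_fiberwise (f := g) (fun i _ => mem_univ _)).symm

private lemma load_comp_equiv {k : ℕ} {α β : Type*} [Fintype α] [Fintype β]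
    (e : α ≃ β) (g : β → Fin k) (j : Fin k) : load (g ∘ e) j = load g j := by
  unfold load
  exact Finset.card_equiv e (by simp)

private lemma load_fin_two {k : ℕ} (h2 : Fin 2 → Fin k) (j : Fin k) :
    load h2 j = (if h2 0 = j then 1 else 0) + (if h2 1 = j then 1 else 0) := by
  rw [load, Finset.card_filter, Fin.sum_univ_two]

private lemma load_sum_type {k : ℕ} {α β : Type*} [Fintype α] [Fintype β]
    (h : α ⊕ β → Fin k) (j : Fin k) :
    load h j = load (h ∘ Sum.inl) j + load (h ∘ Sum.inr) j := by
  simp only [load_eq_card]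
  rw [Fintype.card_congr (Equiv.subtypeSum (p := fun c => h c = j)), Fintype.card_sum]
  rfl

/-- `S_{2m}(t,k)`: the number of functions from `2m` labelled balls to `k` labelled
bins such that every bin receives at most `t` balls. -/
noncomputable def Stk (t k m : ℕ) : ℕ :=
  Nat.card {f : Fin (2 * m) → Fin k // ∀ j : Fin k, ({i | f i = j}).ncard ≤ t}

private lemma Stk_eq_card (t k m : ℕ) :
    Stk t k m = (univ.filter fun g : Fin (2 * m) → Fin k => ∀ j, load g j ≤ t).card := by
  rw [Stk]
  simp only [ncard_eq_load]
  rw [Nat.card_eq_fintype_card, Fintype.card_subtype]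

private lemma Stk_succ_eq (t k m : ℕ) :
    Stk t k (m + 1) = ∑ g : Fin (2 * m) → Fin k,
      (univ.filter fun h2 : Fin 2 → Fin k => ∀ j, load g j + load h2 j ≤ t).card := by
  have e : Fin (2 * (m + 1)) ≃ (Fin (2 * m) ⊕ Fin 2) :=
    (finCongr (by ring)).trans finSumFinEquiv.symm
  have E : {f : Fin (2 * (m + 1)) → Fin k // ∀ j, load f j ≤ t} ≃
      {p : (Fin (2 * m) → Fin k) × (Fin 2 → Fin k) // ∀ j, load p.1 j + load p.2 j ≤ t} := by
    refine ((Equiv.arrowCongr e (Equiv.refl _)).trans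
      (Equiv.sumArrowEquivProdArrow _ _ _)).subtypeEquiv ?_
    intro f
    have h1 : ∀ j, load f j = load ((f ∘ e.symm) ∘ Sum.inl) j + load ((f ∘ e.symm) ∘ Sum.inr) j :=
      fun j => ((load_comp_equiv e.symm f j).symm).trans (load_sum_type _ j)
    simp only [Equiv.trans_apply, Equiv.arrowCongr_apply, Equiv.coe_refl,
      Equiv.sumArrowEquivProdArrow, Equiv.coe_fn_mk]
    rw [show (e.arrowCongr (Equiv.refl (Fin k))) f = f ∘ e.symm from rfl]
    constructor
    · intro hf j; rw [← h1]; exact hf j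
    · intro hf j; rw [h1]; exact hf j
  rw [Stk]
  simp only [ncard_eq_load]
  rw [Nat.card_eq_fintype_card, Fintype.card_congr E, Fintype.card_subtype,
    Finset.card_filter, Fintype.sum_prod_type]
  refine Finset.sum_congr rfl fun g _ => ?_
  rw [Finset.card_filter]

private lemma sum_free {t k : ℕ} {α : Type*} [Fintype α] (g : α → Fin k)
    (hg : ∀ j, load g j ≤ t) :
    ∑ j : Fin k, (t - load g j) = t * k - Fintype.card α := by
  have h1 : ∑ j : Fin k, ((t - load g j) + load g j) = t * k := by
    have : ∀ j : Fin k, (t - load g j) + load g j = t := fun j => Nat.sub_add_cancel (hg j)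
    rw [Finset.sum_congr rfl fun j _ => this j, Finset.sum_const, Finset.card_univ,
      Fintype.card_fin, smul_eq_mul, mul_comm]
  rw [Finset.sum_add_distrib, sum_load] at h1
  omega

private lemma Nfree_le {t k : ℕ} {α : Type*} [Fintype α] (g : α → Fin k)
    (hg : ∀ j, load g j ≤ t) :
    (univ.filter fun j : Fin k => load g j < t).card ≤ t * k - Fintype.card α := by
  rw [← sum_free g hg, Finset.card_eq_sum_ones]
  refine le_trans (Finset.sum_le_sum fun j hj => ?_)
    (Finset.sum_le_sum_of_subset (Finset.filter_subset _ _))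
  rw [Finset.mem_filter] at hj
  omega

private lemma le_mul_Nfree {t k : ℕ} {α : Type*} [Fintype α] (g : α → Fin k)
    (hg : ∀ j, load g j ≤ t) :
    t * k - Fintype.card α ≤ t * (univ.filter fun j : Fin k => load g j < t).card := by
  rw [← sum_free g hg, ← Finset.sum_filter_of_ne (p := fun j => load g j < t)
    (fun j _ hne => by omega)]
  calc ∑ j ∈ univ.filter fun j : Fin k => load g j < t, (t - load g j)
      ≤ ∑ _j ∈ univ.filter fun j : Fin k => load g j < t, t :=
        Finset.sum_le_sum fun j _ => Nat.sub_le _ _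
    _ = t * _ := by rw [Finset.sum_const, smul_eq_mul, mul_comm]

private lemma count_zero {t k : ℕ} {α : Type*} [Fintype α] (g : α → Fin k)
    (hg : ¬ ∀ j, load g j ≤ t) :
    (univ.filter fun h2 : Fin 2 → Fin k => ∀ j, load g j + load h2 j ≤ t).card = 0 := by
  rw [Finset.card_eq_zero, Finset.filter_eq_empty_iff]
  intro h2 _ hQ
  exact hg fun j => le_trans (Nat.le_add_right _ _) (hQ j)

private lemma count_le_sq {t k : ℕ} {α : Type*} [Fintype α] (g : α → Fin k) :
    (univ.filter fun h2 : Fin 2 → Fin k => ∀ j, load g j + load h2 j ≤ t).card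
      ≤ (univ.filter fun j : Fin k => load g j < t).card ^ 2 := by
  set S := univ.filter fun j : Fin k => load g j < t with hS
  have key : (univ.filter fun h2 : Fin 2 → Fin k => ∀ j, load g j + load h2 j ≤ t).card
      ≤ (S ×ˢ S).card := by
    refine Finset.card_le_card_of_injOn (fun h2 => (h2 0, h2 1)) ?_ ?_
    · intro h2 hh2
      rw [Finset.mem_coe, Finset.mem_filter] at hh2
      have h0 := hh2.2 (h2 0)
      have h1 := hh2.2 (h2 1)
      rw [load_fin_two] at h0 h1
      simp only [if_pos rfl] at h0 h1
      have c0 : load g (h2 0) < t := by split_ifs at h0 <;> omega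
      have c1 : load g (h2 1) < t := by split_ifs at h1 <;> omega
      rw [Finset.mem_coe, Finset.mem_product, hS, Finset.mem_filter, Finset.mem_filter]
      exact ⟨⟨mem_univ _, c0⟩, mem_univ _, c1⟩
    · intro a _ b _ hab
      funext i
      fin_cases i
      · exact congrArg Prod.fst hab
      · exact congrArg Prod.snd hab
  rw [Finset.card_product, ← sq] at key
  exact key

private lemma sq_sub_le_count {t k : ℕ} {α : Type*} [Fintype α] (g : α → Fin k)
    (hg : ∀ j, load g j ≤ t) :
    (univ.filter fun j : Fin k => load g j < t).card *
      ((univ.filter fun j : Fin k => load g j < t).card - 1)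
      ≤ (univ.filter fun h2 : Fin 2 → Fin k => ∀ j, load g j + load h2 j ≤ t).card := by
  set S := univ.filter fun j : Fin k => load g j < t with hS
  have key : S.offDiag.card
      ≤ (univ.filter fun h2 : Fin 2 → Fin k => ∀ j, load g j + load h2 j ≤ t).card := by
    refine Finset.card_le_card_of_injOn (fun p => ![p.1, p.2]) ?_ ?_
    · intro p hp
      rw [Finset.mem_coe, Finset.mem_offDiag] at hp
      obtain ⟨hp1, hp2, hne⟩ := hp
      rw [hS, Finset.mem_filter] at hp1 hp2
      rw [Finset.mem_coe, Finset.mem_filter]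
      refine ⟨mem_univ _, fun j => ?_⟩
      rw [load_fin_two]
      show load g j + ((if p.1 = j then 1 else 0) + (if p.2 = j then 1 else 0)) ≤ t
      by_cases hj1 : p.1 = j
      · subst hj1
        rw [if_pos rfl, if_neg (Ne.symm hne)]
        have := hp1.2; omega
      · by_cases hj2 : p.2 = j
        · subst hj2
          rw [if_neg hj1, if_pos rfl]
          have := hp2.2; omega
        · rw [if_neg hj1, if_neg hj2]
          have := hg j; omega
    · intro a _ b _ hab
      have h0 := congrFun hab 0
      have h1 := congrFun hab 1
      simp only [Matrix.cons_val_zero, Matrix.cons_val_one, Matrix.head_cons] at h0 h1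
      exact Prod.ext h0 h1
  rw [Finset.offDiag_card] at key
  rw [Nat.mul_sub, mul_one]
  exact key

theorem stmt15 (t k m : ℕ) (ht : 1 ≤ t) (h : 2 * m + 2 ≤ t * k) :
    (((t : ℝ) * k - 2 * m) / t) * (((t : ℝ) * k - 2 * m) / t - 1) * (Stk t k m : ℝ)
        ≤ (Stk t k (m + 1) : ℝ) ∧
    (Stk t k (m + 1) : ℝ) ≤ ((t : ℝ) * k - 2 * m) ^ 2 * (Stk t k m : ℝ) := by
  classical
  set V : Finset (Fin (2 * m) → Fin k) := univ.filter fun g => ∀ j, load g j ≤ t with hV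
  have hcard : Fintype.card (Fin (2 * m)) = 2 * m := Fintype.card_fin _
  have hSm : Stk t k m = V.card := Stk_eq_card t k m
  have hsplit : Stk t k (m + 1) = ∑ g ∈ V,
      (univ.filter fun h2 : Fin 2 → Fin k => ∀ j, load g j + load h2 j ≤ t).card := by
    rw [Stk_succ_eq]
    rw [← Finset.sum_filter_of_ne (p := fun g => ∀ j, load g j ≤ t)
      (fun g _ hne => by by_contra hg; exact hne (count_zero g hg))]
  have hD : (2 : ℕ) ≤ t * k - 2 * m := by omega
  have hle : 2 * m ≤ t * k := by omega
  have htR : (0 : ℝ) < t := by exact_mod_cast ht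
  set x : ℝ := ((t : ℝ) * k - 2 * m) / t with hx
  have hnum : (0 : ℝ) < (t : ℝ) * k - 2 * m := by
    have : ((t * k - 2 * m : ℕ) : ℝ) = (t : ℝ) * k - 2 * m := by
      push_cast [Nat.cast_sub hle]; ring
    rw [← this]
    exact_mod_cast (by omega : 0 < t * k - 2 * m)
  have hx0 : 0 < x := div_pos hnum htR
  constructor
  · -- lower bound
    have key : ∀ g ∈ V, x * (x - 1) ≤
        ((univ.filter fun h2 : Fin 2 → Fin k => ∀ j, load g j + load h2 j ≤ t).card : ℝ) := by
      intro g hg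
      rw [hV, Finset.mem_filter] at hg
      set N : ℕ := (univ.filter fun j : Fin k => load g j < t).card with hN
      have hN1 : t * k - 2 * m ≤ t * N := by
        have := le_mul_Nfree g hg.2; rwa [hcard] at this
      have hxN : x ≤ (N : ℝ) := by
        rw [hx, div_le_iff₀ htR]
        have : ((t * k - 2 * m : ℕ) : ℝ) ≤ ((t * N : ℕ) : ℝ) := by exact_mod_cast hN1
        push_cast [Nat.cast_sub hle] at this
        linarith
      have hNpos : 0 < N := by
        have : (0 : ℝ) < (N : ℝ) := lt_of_lt_of_le hx0 hxN
        exact_mod_cast this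
      have hN1R : (1 : ℝ) ≤ (N : ℝ) := by exact_mod_cast hNpos
      have h2 : x * (x - 1) ≤ (N : ℝ) * ((N : ℝ) - 1) := by
        nlinarith [mul_nonneg (sub_nonneg.2 hxN) (by linarith : (0:ℝ) ≤ (N:ℝ) + x - 1)]
      have h3 : (N : ℝ) * ((N : ℝ) - 1) ≤ ((N * (N - 1) : ℕ) : ℝ) := by
        push_cast [Nat.cast_sub hNpos]
        ring_nf
        linarith
      refine le_trans h2 (le_trans h3 ?_)
      exact_mod_cast sq_sub_le_count g hg.2
    calc x * (x - 1) * (Stk t k m : ℝ)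
        = ∑ _g ∈ V, x * (x - 1) := by
          rw [hSm, Finset.sum_const, nsmul_eq_mul]; ring
      _ ≤ ∑ g ∈ V, ((univ.filter fun h2 : Fin 2 → Fin k =>
            ∀ j, load g j + load h2 j ≤ t).card : ℝ) := Finset.sum_le_sum key
      _ = ((∑ g ∈ V, (univ.filter fun h2 : Fin 2 → Fin k =>
            ∀ j, load g j + load h2 j ≤ t).card : ℕ) : ℝ) := by push_cast; rfl
      _ = (Stk t k (m + 1) : ℝ) := by rw [← hsplit]
  · -- upper bound
    have hub : Stk t k (m + 1) ≤ (t * k - 2 * m) ^ 2 * Stk t k m := by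
      rw [hsplit, hSm, Finset.card_eq_sum_ones V, Finset.mul_sum]
      refine Finset.sum_le_sum fun g hg => ?_
      rw [hV, Finset.mem_filter] at hg
      have h1 := count_le_sq (t := t) g
      have h2 := Nfree_le g hg.2
      rw [hcard] at h2
      calc _ ≤ _ := h1
        _ ≤ (t * k - 2 * m) ^ 2 * 1 := by
            rw [mul_one]; exact Nat.pow_le_pow_left h2 2
    calc (Stk t k (m + 1) : ℝ) ≤ (((t * k - 2 * m) ^ 2 * Stk t k m : ℕ) : ℝ) := by
          exact_mod_cast hub
      _ = ((t : ℝ) * k - 2 * m) ^ 2 * (Stk t k m : ℝ) := by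
          push_cast [Nat.cast_sub hle]; ring
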